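/- Let blocks B_1,...,B_k each contain at least one operation, and suppose the dequeue calling FindResponse is in block b and returns the e-th enqueue located in block b_e ≤ b. Then b − b_e ≤ 2·size(b_e) + size(b−1) + 1, where size is the queue-size function of the recurrence. -/

import Mathlib

/-- Dequeue: remove the oldest element if nonempty; a null dequeue leaves the queue
unchanged. -/
def deqN : List ℕ → List ℕ
  | [] => []
  | _ :: t => t

/-- Total number of enqueues in blocks `1..b`. -/
def sumEnq (nE : ℕ → ℕ) (b : ℕ) : ℕ := ∑ j ∈ Finset.Icc 1 b, nE j

/-- Perform the enqueues of block `b`; the enqueues are labelled by their global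
rank, i.e. the `k`-th enqueue of block `b` enqueues the value `sumEnq (b-1) + k`. -/
def pushBlock (nE : ℕ → ℕ) (b : ℕ) (q : List ℕ) : List ℕ :=
  q ++ (List.range (nE b)).map (fun k => sumEnq nE (b - 1) + 1 + k)

/-- Execute blocks `1..b` in order on an initially empty FIFO queue; within block
`b`, its enqueues occur first, then its dequeues. -/
def runBlocksN (nE nD : ℕ → ℕ) : ℕ → List ℕ
  | 0 => []
  | b + 1 => deqN^[nD (b + 1)] (pushBlock nE (b + 1) (runBlocksN nE nD b))

lemma deqN_eq_drop (l : List ℕ) : deqN l = l.drop 1 := by cases l <;> rfl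

lemma iterate_deqN (n : ℕ) (l : List ℕ) : deqN^[n] l = l.drop n := by
  induction n generalizing l with
  | zero => simp
  | succ n ih =>
    rw [Function.iterate_succ_apply, deqN_eq_drop, ih, List.drop_drop, Nat.add_comm]

lemma drop_range' (m s n : ℕ) : (List.range' s n).drop m = List.range' (s + m) (n - m) := by
  induction m generalizing s n with
  | zero => simp
  | succ m ih =>
    cases n with
    | zero => simp
    | succ n =>
      rw [List.range'_succ, List.drop_succ_cons, ih, Nat.succ_sub_succ]
      congr 1
      omega

lemma sumEnq_succ (nE : ℕ → ℕ) (j : ℕ) :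
    sumEnq nE (j + 1) = sumEnq nE j + nE (j + 1) :=
  Finset.sum_Icc_succ_top (by omega) nE

lemma sumEnq_mono (nE : ℕ → ℕ) {a c : ℕ} (h : a ≤ c) : sumEnq nE a ≤ sumEnq nE c :=
  Finset.sum_le_sum_of_subset (Finset.Icc_subset_Icc_right h)

lemma pushBlock_eq (nE nD : ℕ → ℕ) (j : ℕ)
    (h : runBlocksN nE nD j =
      List.range' (sumEnq nE j - (runBlocksN nE nD j).length + 1) (runBlocksN nE nD j).length)
    (hle : (runBlocksN nE nD j).length ≤ sumEnq nE j) :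
    pushBlock nE (j + 1) (runBlocksN nE nD j) =
      List.range' (sumEnq nE j - (runBlocksN nE nD j).length + 1)
        (nE (j + 1) + (runBlocksN nE nD j).length) := by
  set L := (runBlocksN nE nD j).length with hL
  set S := sumEnq nE j with hS
  have hmap : (List.range (nE (j + 1))).map (fun k => sumEnq nE ((j + 1) - 1) + 1 + k)
      = List.range' (S + 1) (nE (j + 1)) := by
    rw [List.range'_eq_map_range]
    simp [hS]
  have harith : S + 1 = (S - L + 1) + 1 * L := by omega
  rw [pushBlock, h, hmap, harith, List.range'_append, Nat.add_comm L]

lemma len_succ (nE nD : ℕ → ℕ) (j : ℕ) :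
    (runBlocksN nE nD (j + 1)).length =
      ((runBlocksN nE nD j).length + nE (j + 1)) - nD (j + 1) := by
  show (deqN^[nD (j + 1)] (pushBlock nE (j + 1) (runBlocksN nE nD j))).length = _
  rw [iterate_deqN, List.length_drop, pushBlock]
  simp

lemma shape (nE nD : ℕ → ℕ) (j : ℕ) :
    (runBlocksN nE nD j).length ≤ sumEnq nE j ∧
    runBlocksN nE nD j =
      List.range' (sumEnq nE j - (runBlocksN nE nD j).length + 1)
        (runBlocksN nE nD j).length := by
  induction j with
  | zero =>
    constructor
    · simp [runBlocksN]
    · simp [runBlocksN]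
  | succ j ih =>
    obtain ⟨hle, hsh⟩ := ih
    set L := (runBlocksN nE nD j).length with hL
    set S := sumEnq nE j with hS
    have hrun : runBlocksN nE nD (j + 1) =
        List.range' (S - L + 1 + nD (j + 1)) (nE (j + 1) + L - nD (j + 1)) := by
      show deqN^[nD (j + 1)] (pushBlock nE (j + 1) (runBlocksN nE nD j)) = _
      rw [pushBlock_eq nE nD j hsh hle, iterate_deqN, drop_range']
    have hlen : (runBlocksN nE nD (j + 1)).length = (L + nE (j + 1)) - nD (j + 1) :=
      len_succ nE nD j
    have hSsucc : sumEnq nE (j + 1) = S + nE (j + 1) := sumEnq_succ nE j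
    clear_value L S
    constructor
    · omega
    · rcases le_or_gt (nD (j + 1)) (nE (j + 1) + L) with h | h
      · rw [hrun, List.length_range', hSsucc]
        congr 1
        omega
      · have h0 : nE (j + 1) + L - nD (j + 1) = 0 := by omega
        rw [hrun, h0]
        simp


/-- Lemma 5.2: if every block is nonempty, and the (non-null) `i`-th dequeue of
block `b` returns a value enqueued in block `b_e ≤ b`, then
`b - b_e ≤ 2·size(b_e) + size(b-1) + 1`. -/
theorem doubling_search_bound (nE nD : ℕ → ℕ) (size : ℕ → ℤ)
    (h0 : size 0 = 0)
    (hrec : ∀ b, size (b + 1) =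
      max 0 (size b + (nE (b + 1) : ℤ) - (nD (b + 1) : ℤ)))
    (hnonempty : ∀ j, 1 ≤ j → 1 ≤ nE j + nD j)
    (b bₑ i m : ℕ) (hbe1 : 1 ≤ bₑ) (hbeb : bₑ ≤ b)
    (hi : 1 ≤ i) (hin : i ≤ nD b)
    (hhead : (deqN^[i - 1] (pushBlock nE b (runBlocksN nE nD (b - 1)))).head? = some m)
    (hm1 : sumEnq nE (bₑ - 1) < m) (hm2 : m ≤ sumEnq nE bₑ) :
    (b : ℤ) - (bₑ : ℤ) ≤ 2 * size bₑ + size (b - 1) + 1 := by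
  have size_eq : ∀ j, size j = ((runBlocksN nE nD j).length : ℤ) := by
    intro j
    induction j with
    | zero => simpa [runBlocksN] using h0
    | succ j ih =>
      rw [hrec j, ih, len_succ nE nD j]
      omega
  have hlenle : ∀ j, (runBlocksN nE nD j).length ≤ sumEnq nE j := fun j => (shape nE nD j).1
  obtain ⟨b', rfl⟩ : ∃ b', b = b' + 1 := ⟨b - 1, by omega⟩
  simp only [Nat.add_sub_cancel] at hhead ⊢
  set d : ℕ → ℕ := fun j => sumEnq nE j - (runBlocksN nE nD j).length with hd
  have hdm : ∀ j, d j ≤ d (j + 1) := by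
    intro j
    have h1 := len_succ nE nD j
    have h2 := hlenle j
    have h3 := hlenle (j + 1)
    have h4 := sumEnq_succ nE j
    simp only [hd]
    omega
  have hdmono : Monotone d := monotone_nat_of_le_succ hdm
  -- decode hhead
  rw [pushBlock_eq nE nD b' (shape nE nD b').2 (shape nE nD b').1, iterate_deqN, drop_range',
    List.head?_range'] at hhead
  have hdbm : d b' + i = m := by
    by_cases hz : nE (b' + 1) + (runBlocksN nE nD b').length - (i - 1) = 0
    · simp [hz] at hhead
    · simp [hz] at hhead
      have := hlenle b'
      simp only [hd]
      omega
  have key : ∀ j, bₑ ≤ j → j + 1 ≤ b' → d (j + 1) = d j + nD (j + 1) := by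
    intro j hj1 hj2
    rcases le_or_gt (nD (j + 1)) ((runBlocksN nE nD j).length + nE (j + 1)) with h | h
    · have h1 := len_succ nE nD j
      have h2 := hlenle j
      have h4 := sumEnq_succ nE j
      simp only [hd]
      omega
    · exfalso
      have hlz : (runBlocksN nE nD (j + 1)).length = 0 := by rw [len_succ]; omega
      have h1 : d (j + 1) = sumEnq nE (j + 1) := by
        simp only [hd, hlz, Nat.sub_zero]
      have h2 : sumEnq nE bₑ ≤ sumEnq nE (j + 1) := sumEnq_mono nE (by omega)
      have h3 : d (j + 1) ≤ d b' := hdmono hj2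
      omega
  have tel : ∀ t, bₑ + t ≤ b' →
      d bₑ + sumEnq nE bₑ + t ≤ d (bₑ + t) + sumEnq nE (bₑ + t) := by
    intro t
    induction t with
    | zero => intro _; simp
    | succ t ih =>
      intro ht
      have h1 := key (bₑ + t) (by omega) (by omega)
      have h2 := sumEnq_succ nE (bₑ + t)
      have h3 := hnonempty (bₑ + t + 1) (by omega)
      have h4 := ih (by omega)
      have he : bₑ + (t + 1) = (bₑ + t) + 1 := by omega
      rw [he]
      omega
  have e1 : d b' + (runBlocksN nE nD b').length = sumEnq nE b' := by
    have := hlenle b'; simp only [hd]; omega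
  have e2 : d bₑ + (runBlocksN nE nD bₑ).length = sumEnq nE bₑ := by
    have := hlenle bₑ; simp only [hd]; omega
  rw [size_eq bₑ, size_eq b']
  rcases eq_or_lt_of_le hbeb with heq | hlt
  · omega
  · have h5 := tel (b' - bₑ) (by omega)
    rw [show bₑ + (b' - bₑ) = b' from by omega] at h5
    omega
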